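/- Let (G,X) be a strongly marked group with Property D. For g ∈ G, define Supp(g) ⊆ X to be the set of generators appearing in some (equivalently, any) reduced syllabic expression of g. Then for any subset Y ⊆ X and g ∈ G, one has g ∈ G_Y if and only if Supp(g) ⊆ Y, where G_Y is the subgroup of G generated by Y. -/

import Mathlib

namespace Paper

/-- The alternating list `(a, b, a, b, ...)` of length `m`. -/
def altList {α : Type*} (a b : α) : ℕ → List α
  | 0 => []
  | n + 1 => a :: altList b a n

/-- The alternating product `a b a ⋯` of length `m` in a monoid. -/
def altProd {G : Type*} [Monoid G] (a b : G) (m : ℕ) : G := (altList a b m).prod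

variable {G : Type*} [Group G]

/-- The set of syllables of a generating set `X`: nontrivial powers of elements of `X`. -/
def Syll (X : Set G) : Set G := {s | ∃ x ∈ X, ∃ a : ℤ, s = x ^ a ∧ s ≠ 1}

/-- A syllabic word: a list all of whose entries are syllables. -/
def SylWord (X : Set G) (w : List G) : Prop := ∀ s ∈ w, s ∈ Syll X

/-- The syllabic length of an element: minimal length of a syllabic word representing it. -/
noncomputable def sylLen (X : Set G) (g : G) : ℕ :=
  sInf {n | ∃ w : List G, SylWord X w ∧ w.prod = g ∧ w.length = n}

/-- A syllabic word is reduced if its length is the syllabic length of the element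
it represents. -/
def Reduced (X : Set G) (w : List G) : Prop :=
  SylWord X w ∧ w.length = sylLen X w.prod

/-- Elementary M-operation of type I. -/
def MOpI (X : Set G) (w w' : List G) : Prop :=
  ∃ (w₁ w₂ : List G) (s t : G), s ∈ Syll X ∧ t ∈ Syll X ∧
    w = w₁ ++ [s, t] ++ w₂ ∧
    ((s * t ∈ Syll X ∧ w' = w₁ ++ [s * t] ++ w₂) ∨ (s * t = 1 ∧ w' = w₁ ++ w₂))

/-- Elementary M-operation of type II. -/
def MOpII (X : Set G) (w w' : List G) : Prop :=
  ∃ (w₁ w₂ : List G) (s t : G) (m : ℕ), s ∈ Syll X ∧ t ∈ Syll X ∧ 2 ≤ m ∧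
    altProd s t m = altProd t s m ∧ sylLen X (altProd s t m) = m ∧
    w = w₁ ++ altList s t m ++ w₂ ∧ w' = w₁ ++ altList t s m ++ w₂

/-- Elementary M-operation (of type I or type II). -/
def MOp (X : Set G) (w w' : List G) : Prop := MOpI X w w' ∨ MOpII X w w'

/-- A syllabic word is M-reduced if its length cannot be shortened by any finite
sequence of elementary M-operations. -/
def MReduced (X : Set G) (w : List G) : Prop :=
  ∀ w', Relation.ReflTransGen (MOp X) w w' → ¬ w'.length < w.length

/-- Property D: a syllabic word is reduced iff it is M-reduced, and any two reduced
syllabic words representing the same element are connected by a finite sequence of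
elementary M-operations of type II. -/
def PropertyD (X : Set G) : Prop :=
  (∀ w : List G, SylWord X w → (Reduced X w ↔ MReduced X w)) ∧
  (∀ w w' : List G, Reduced X w → Reduced X w' → w.prod = w'.prod →
    Relation.ReflTransGen (MOpII X) w w')

/-- `(G, X)` is a marked group: `X` generates `G`. -/
def Marked (X : Set G) : Prop := Subgroup.closure X = ⊤

/-- `(G, X)` is a strongly marked group. -/
def StronglyMarked (X : Set G) : Prop :=
  Marked X ∧ (1 : G) ∉ X ∧
    ∀ x ∈ X, ∀ y ∈ X, ∀ a b : ℤ, x ^ a ≠ 1 → y ^ b ≠ 1 →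
      (x ^ a * y ^ b ∈ Syll X ∨ x ^ a * y ^ b = 1) → x = y

/-- The data of a Dyer graph: a simplicial graph with edge labels `m ≥ 2` and vertex
labels `f ∈ ℕ_{≥2} ∪ {∞}` such that any edge with `m(e) ≠ 2` has both endpoints
labelled `2`. -/
structure DyerData (V : Type*) where
  adj : V → V → Prop
  symm : ∀ u v, adj u v → adj v u
  loopless : ∀ v, ¬ adj v v
  m : V → V → ℕ
  m_symm : ∀ u v, m u v = m v u
  m_two_le : ∀ u v, adj u v → 2 ≤ m u v
  f : V → ℕ∞
  f_two_le : ∀ v, 2 ≤ f v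
  dyer : ∀ u v, adj u v → m u v ≠ 2 → f u = 2 ∧ f v = 2

/-- The defining relators of the Dyer group of `Δ`. -/
def DyerData.rels {V : Type*} (Δ : DyerData V) : Set (FreeGroup V) :=
  {r | ∃ v, Δ.f v ≠ ⊤ ∧ r = (FreeGroup.of v) ^ (Δ.f v).toNat} ∪
  {r | ∃ u v, Δ.adj u v ∧
    r = altProd (FreeGroup.of u) (FreeGroup.of v) (Δ.m u v) *
        (altProd (FreeGroup.of v) (FreeGroup.of u) (Δ.m u v))⁻¹}

/-- The Dyer group of the data `Δ`. -/
abbrev DyerGroup {V : Type*} (Δ : DyerData V) := PresentedGroup Δ.rels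

/-- The standard generating set of a Dyer group. -/
def DyerGens {V : Type*} (Δ : DyerData V) : Set (DyerGroup Δ) :=
  Set.range (PresentedGroup.of (rels := Δ.rels))


/-- Auxiliary predicate: `s` is a syllable with base in `Y`. -/
def PP (X Y : Set G) (s : G) : Prop :=
  s ∈ Syll X ∧ ∃ x ∈ Y, ∃ a : ℤ, s = x ^ a

lemma altList_eq_cons {α : Type*} (a b : α) (n : ℕ) :
    altList a b (n + 2) = a :: b :: altList a b n := rfl

lemma mem_altList {α : Type*} {a b x : α} : ∀ {m : ℕ}, x ∈ altList a b m → x = a ∨ x = b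
  | 0, h => by simp [altList] at h
  | 1, h => by simpa [altList] using Or.inl (by simpa [altList] using h)
  | (n+2), h => by
      rw [altList_eq_cons] at h
      rcases List.mem_cons.1 h with h | h
      · exact Or.inl h
      rcases List.mem_cons.1 h with h | h
      · exact Or.inr h
      · exact mem_altList h

lemma self_mem_altList {α : Type*} {a b : α} {m : ℕ} (hm : 2 ≤ m) :
    a ∈ altList a b m ∧ b ∈ altList a b m := by
  obtain ⟨k, rfl⟩ : ∃ k, m = k + 2 := ⟨m - 2, by omega⟩
  rw [altList_eq_cons]
  exact ⟨List.mem_cons_self, List.mem_cons_of_mem _ List.mem_cons_self⟩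

lemma syll_ne_one {s : G} (hs : s ∈ Syll X) : s ≠ 1 := by
  obtain ⟨x, hx, a, hsa, hne⟩ := hs
  exact hne

lemma mop_pres {Y : Set G} (hSM : StronglyMarked X) (hY : Y ⊆ X) {w w' : List G}
    (h : MOp X w w') (hP : ∀ s ∈ w, PP X Y s) :
    (∀ s ∈ w', PP X Y s) ∧ w'.prod = w.prod := by
  rcases h with h | h
  · obtain ⟨w₁, w₂, s, t, hs, ht, hw, hcase⟩ := h
    have hsP := hP s (by simp [hw])
    have htP := hP t (by simp [hw])
    obtain ⟨hsS, x, hx, a, rfl⟩ := hsP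
    obtain ⟨htS, y, hy, b, rfl⟩ := htP
    have hxa : x ^ a ≠ 1 := syll_ne_one hsS
    have hyb : y ^ b ≠ 1 := syll_ne_one htS
    rcases hcase with ⟨hst, rfl⟩ | ⟨hst, rfl⟩
    · have hxy : x = y := hSM.2.2 x (hY hx) y (hY hy) a b hxa hyb (Or.inl hst)
      subst hxy
      constructor
      · intro u hu
        simp only [List.mem_append, List.mem_singleton] at hu
        rcases hu with (hu | rfl) | hu
        · exact hP u (by simp [hw, hu])
        · exact ⟨hst, x, hx, a + b, by rw [zpow_add]⟩
        · exact hP u (by simp [hw, hu])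
      · simp [hw, List.prod_append, mul_assoc]
    · constructor
      · intro u hu
        simp only [List.mem_append] at hu
        rcases hu with hu | hu
        · exact hP u (by simp [hw, hu])
        · exact hP u (by simp [hw, hu])
      · have h1 : x ^ a * y ^ b = 1 := hst
        rw [hw]
        simp only [List.prod_append, List.prod_cons, List.prod_nil, ← mul_assoc, mul_one, h1]
  · obtain ⟨w₁, w₂, s, t, m, hs, ht, hm, hcomm, -, hw, hw'⟩ := h
    have hmem := self_mem_altList (a := s) (b := t) hm
    constructor
    · intro u hu
      rw [hw'] at hu
      simp only [List.mem_append] at hu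
      rcases hu with (hu | hu) | hu
      · exact hP u (by rw [hw]; simp only [List.mem_append]; tauto)
      · rcases mem_altList hu with rfl | rfl
        · exact hP u (by rw [hw]; simp only [List.mem_append]; exact Or.inl (Or.inr hmem.2))
        · exact hP u (by rw [hw]; simp only [List.mem_append]; exact Or.inl (Or.inr hmem.1))
      · exact hP u (by rw [hw]; simp only [List.mem_append]; tauto)
    · rw [hw, hw']
      simp only [List.prod_append]
      rw [show (altList t s m).prod = (altList s t m).prod from hcomm.symm]

lemma chain_pres {Y : Set G} (hSM : StronglyMarked X) (hY : Y ⊆ X) {w w' : List G}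
    (h : Relation.ReflTransGen (MOp X) w w') (hP : ∀ s ∈ w, PP X Y s) :
    (∀ s ∈ w', PP X Y s) ∧ w'.prod = w.prod := by
  induction h with
  | refl => exact ⟨hP, rfl⟩
  | tail _ hstep ih =>
      obtain ⟨h1, h2⟩ := mop_pres hSM hY hstep ih.1
      exact ⟨h1, by rw [h2, ih.2]⟩

lemma mopII_back {Y : Set G} {w w' : List G} (h : MOpII X w w')
    (hQ : ∀ s ∈ w', ∃ x ∈ Y, ∃ a : ℤ, s = x ^ a) :
    ∀ s ∈ w, ∃ x ∈ Y, ∃ a : ℤ, s = x ^ a := by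
  obtain ⟨w₁, w₂, s, t, m, hs, ht, hm, hcomm, -, hw, hw'⟩ := h
  have hmem := self_mem_altList (a := t) (b := s) hm
  intro u hu
  rw [hw] at hu
  simp only [List.mem_append] at hu
  rcases hu with (hu | hu) | hu
  · exact hQ u (by rw [hw']; simp only [List.mem_append]; tauto)
  · rcases mem_altList hu with rfl | rfl
    · exact hQ u (by rw [hw']; simp only [List.mem_append]; exact Or.inl (Or.inr hmem.2))
    · exact hQ u (by rw [hw']; simp only [List.mem_append]; exact Or.inl (Or.inr hmem.1))
  · exact hQ u (by rw [hw']; simp only [List.mem_append]; tauto)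

lemma chainII_back {Y : Set G} {w w' : List G}
    (h : Relation.ReflTransGen (MOpII X) w w')
    (hQ : ∀ s ∈ w', ∃ x ∈ Y, ∃ a : ℤ, s = x ^ a) :
    ∀ s ∈ w, ∃ x ∈ Y, ∃ a : ℤ, s = x ^ a := by
  induction h using Relation.ReflTransGen.head_induction_on with
  | refl => exact hQ
  | head hstep _ ih => exact mopII_back hstep ih

lemma exists_reduced {Y : Set G} (hSM : StronglyMarked X) (hPD : PropertyD X)
    (hY : Y ⊆ X) (w₀ : List G) (hP : ∀ s ∈ w₀, PP X Y s) :
    ∃ w', Reduced X w' ∧ w'.prod = w₀.prod ∧ ∀ s ∈ w', PP X Y s := by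
  obtain ⟨n, hn⟩ : ∃ n, w₀.length = n := ⟨_, rfl⟩
  induction n using Nat.strong_induction_on generalizing w₀ with
  | _ n ih =>
    have hSyl : SylWord X w₀ := fun s hs => (hP s hs).1
    by_cases hred : Reduced X w₀
    · exact ⟨w₀, hred, rfl, hP⟩
    · have hnM : ¬ MReduced X w₀ := fun h => hred ((hPD.1 w₀ hSyl).2 h)
      rw [MReduced] at hnM
      push_neg at hnM
      obtain ⟨w'', hchain, hlt⟩ := hnM
      obtain ⟨hP'', hprod''⟩ := chain_pres hSM hY hchain hP
      obtain ⟨w', h1, h2, h3⟩ := ih w''.length (by omega) w'' hP'' rfl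
      exact ⟨w', h1, by rw [h2, hprod''], h3⟩

theorem statement_7 {G : Type*} [Group G] {X : Set G}
    (hSM : StronglyMarked X) (hPD : PropertyD X)
    (Y : Set G) (hY : Y ⊆ X) (g : G)
    (w : List G) (hw : Reduced X w) (hprod : w.prod = g) :
    g ∈ Subgroup.closure Y ↔ ∀ s ∈ w, ∃ x ∈ Y, ∃ a : ℤ, s = x ^ a := by
  constructor
  · intro hg
    have hg' : g ∈ Submonoid.closure (Y ∪ Y⁻¹) := by
      rw [← Subgroup.closure_toSubmonoid]; exact hg
    obtain ⟨l, hl, hlprod⟩ := Submonoid.exists_list_of_mem_closure hg'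
    have hPl : ∀ s ∈ l, PP X Y s := by
      intro s hs
      rcases hl s hs with hsY | hsY
      · have hne : s ≠ 1 := fun h => hSM.2.1 (h ▸ hY hsY)
        exact ⟨⟨s, hY hsY, 1, by simp, hne⟩, s, hsY, 1, by simp⟩
      · have hsY' : s⁻¹ ∈ Y := hsY
        have hne : s ≠ 1 := by
          intro h
          exact hSM.2.1 (by simpa [h] using hY hsY')
        refine ⟨⟨s⁻¹, hY hsY', -1, by simp, hne⟩, s⁻¹, hsY', -1, by simp⟩
    obtain ⟨w', hred', hprod', hP'⟩ := exists_reduced hSM hPD hY l hPl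
    have hchain : Relation.ReflTransGen (MOpII X) w w' :=
      hPD.2 w w' hw hred' (by rw [hprod, hprod', hlprod])
    exact chainII_back hchain (fun s hs => (hP' s hs).2)
  · intro h
    rw [← hprod]
    refine Subgroup.list_prod_mem _ (fun s hs => ?_)
    obtain ⟨x, hx, a, rfl⟩ := h s hs
    exact zpow_mem (Subgroup.subset_closure hx) a

end Paper
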